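/- For every integer n ≥ 1, every real number s > 1, and every ε with 0 < ε < 1, the function f : ℂ^n → ℝ given by f(z) = 1 / ( |∏_{i=1}^n ln|z_i||^s · ∏_{i=1}^n |z_i|^2 ) is integrable (with respect to Lebesgue measure on ℂ^n) on the ball { z ∈ ℂ^n : ‖z‖ < ε }. -/

import Mathlib

open MeasureTheory Set Real

theorem aux_real (s : ℝ) (hs : 1 < s) (ε : ℝ) (hε0 : 0 < ε) (hε1 : ε < 1) :
    IntegrableOn (fun r : ℝ => 1 / (r * |Real.log r| ^ s)) (Ioo 0 ε) := by
  set a : ℝ := -Real.log ε with ha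
  have ha0 : 0 < a := by
    have := Real.log_neg hε0 hε1; simp [ha]; linarith
  have himg : (fun u : ℝ => Real.exp (-u)) '' (Ioi a) = Ioo 0 ε := by
    ext r
    constructor
    · rintro ⟨u, hu, rfl⟩
      refine ⟨Real.exp_pos _, ?_⟩
      have : -u < Real.log ε := by simp only [ha, mem_Ioi] at hu; simpa using neg_lt_neg hu
      calc Real.exp (-u) < Real.exp (Real.log ε) := Real.exp_lt_exp.2 this
        _ = ε := Real.exp_log hε0
    · rintro ⟨hr0, hrε⟩
      refine ⟨-Real.log r, ?_, by simp [Real.exp_log hr0]⟩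
      have : Real.log r < Real.log ε := Real.log_lt_log hr0 hrε
      simp only [ha, mem_Ioi]; linarith
  have hderiv : ∀ u ∈ Ioi a, HasDerivWithinAt (fun u : ℝ => Real.exp (-u))
      (-Real.exp (-u)) (Ioi a) u := by
    intro u hu
    have := (Real.hasDerivAt_exp (-u)).comp u (hasDerivAt_neg u)
    simpa [mul_comm, Function.comp_def] using this.hasDerivWithinAt
  have hinj : InjOn (fun u : ℝ => Real.exp (-u)) (Ioi a) := by
    intro x _ y _ h
    have := Real.exp_injective h
    linarith [this]
  rw [← himg, integrableOn_image_iff_integrableOn_abs_deriv_smul measurableSet_Ioi hderiv hinj]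
  have : IntegrableOn (fun u : ℝ => u ^ (-s)) (Ioi a) :=
    integrableOn_Ioi_rpow_of_lt (by linarith) ha0
  refine this.congr_fun ?_ measurableSet_Ioi
  intro u hu
  have hu0 : 0 < u := lt_trans ha0 hu
  have hexp : (0:ℝ) < Real.exp (-u) := Real.exp_pos _
  simp only [smul_eq_mul, abs_neg, abs_of_pos hexp, Real.log_exp, abs_neg, abs_of_pos hu0]
  rw [Real.rpow_neg hu0.le]
  field_simp


theorem aux_complex (s : ℝ) (hs : 1 < s) (ε : ℝ) (hε0 : 0 < ε) (hε1 : ε < 1) :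
    IntegrableOn (fun w : ℂ => 1 / (|Real.log (‖w‖)| ^ s * ‖w‖ ^ 2))
      (Metric.ball 0 ε) := by
  set g : ℂ → ℝ := fun w => 1 / (|Real.log (‖w‖)| ^ s * ‖w‖ ^ 2) with hg
  have habs : Measurable (fun w : ℂ => ‖w‖) := continuous_norm.measurable
  have hmeas : Measurable g :=
    measurable_const.div
      (((Real.continuous_rpow_const (by linarith : (0:ℝ) ≤ s)).measurable.comp
        habs.log.abs).mul (habs.pow_const 2))
  refine ⟨(hmeas.aestronglyMeasurable).restrict, ?_⟩
  rw [hasFiniteIntegral_def]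
  -- transfer to ℝ × ℝ
  set e : ℝ × ℝ → ℂ := ⇑Complex.measurableEquivRealProd.symm with he
  have hemp : MeasurePreserving e volume volume :=
    Complex.volume_preserving_equiv_real_prod.symm
  have heemb : MeasurableEmbedding e :=
    Complex.measurableEquivRealProd.symm.measurableEmbedding
  set A : Set (ℝ × ℝ) := e ⁻¹' (Metric.ball 0 ε) with hA
  have step1 : ∫⁻ w in Metric.ball (0:ℂ) ε, (‖g w‖₊ : ENNReal)
      = ∫⁻ q in A, (‖g (e q)‖₊ : ENNReal) :=
    (hemp.setLIntegral_comp_preimage_emb heemb _ _).symm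
  -- key abs identity
  have habs_e : ∀ p : ℝ × ℝ, ‖e (polarCoord.symm p)‖ = |p.1| := by
    intro p
    rw [show e (polarCoord.symm p) = Complex.polarCoord.symm p from ?_,
      Complex.norm_polarCoord_symm]
    apply Complex.ext <;>
      simp [he, Complex.polarCoord_symm_apply, Complex.measurableEquivRealProd,
        Complex.polarCoord, polarCoord]
  -- restrict to polar source
  have hAmeas : MeasurableSet A := heemb.measurable measurableSet_ball
  have step2 : ∫⁻ q in A, (‖g (e q)‖₊ : ENNReal)
      = ∫⁻ q in A ∩ polarCoord.source, (‖g (e q)‖₊ : ENNReal) := by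
    exact setLIntegral_congr
      (inter_ae_eq_left_of_ae_eq_univ polarCoord_source_ae_eq_univ).symm
  set T : Set (ℝ × ℝ) := polarCoord.target ∩ polarCoord.symm ⁻¹' A with hT
  have hTimg : polarCoord.symm '' T = polarCoord.source ∩ A := by
    rw [hT, Set.image_inter_preimage, polarCoord.symm_image_target_eq_source]
  have hsymm_cont : Continuous (⇑polarCoord.symm) := by
    have : ⇑polarCoord.symm = fun p : ℝ × ℝ => (p.1 * Real.cos p.2, p.1 * Real.sin p.2) := by
      funext p; exact polarCoord_symm_apply p
    rw [this]
    exact (continuous_fst.mul (Real.continuous_cos.comp continuous_snd)).prodMk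
      (continuous_fst.mul (Real.continuous_sin.comp continuous_snd))
  have hTmeas : MeasurableSet T :=
    polarCoord.open_target.measurableSet.inter (hsymm_cont.measurable hAmeas)
  set B : ℝ × ℝ → ℝ × ℝ →L[ℝ] ℝ × ℝ := fun p =>
    LinearMap.toContinuousLinearMap (Matrix.toLin (Module.Basis.finTwoProd ℝ) (Module.Basis.finTwoProd ℝ)
      !![Real.cos p.2, -p.1 * Real.sin p.2; Real.sin p.2, p.1 * Real.cos p.2]) with hB
  have hBdet : ∀ p, (B p).det = p.1 := by
    intro p
    conv_rhs => rw [← one_mul p.1, ← Real.cos_sq_add_sin_sq p.2]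
    simp only [hB, neg_mul, LinearMap.det_toContinuousLinearMap, LinearMap.det_toLin,
      Matrix.det_fin_two_of, sub_neg_eq_add]
    ring
  have hderiv : ∀ p ∈ T, HasFDerivWithinAt (⇑polarCoord.symm) (B p) T p := fun p _ =>
    (hasFDerivAt_polarCoord_symm p).hasFDerivWithinAt
  have hinj : InjOn (⇑polarCoord.symm) T := by
    have := polarCoord.symm.injOn
    rw [polarCoord.symm_source] at this
    exact this.mono inter_subset_left
  have step3 : ∫⁻ q in A ∩ polarCoord.source, (‖g (e q)‖₊ : ENNReal)
      = ∫⁻ p in T, ENNReal.ofReal |(B p).det| * (‖g (e (polarCoord.symm p))‖₊ : ENNReal) := by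
    have key := lintegral_image_eq_lintegral_abs_det_fderiv_mul (μ := volume) hTmeas hderiv hinj
      (fun z => (‖g (e z)‖₊ : ENNReal))
    rw [hTimg, Set.inter_comm] at key
    exact key
  set h : ℝ → ℝ := fun r => 1 / (|Real.log r| ^ s * r ^ 2) with hh
  set Φ : ℝ × ℝ → ENNReal := fun p => ENNReal.ofReal p.1 * (‖h p.1‖₊ : ENNReal) with hΦ
  have step4 : ∫⁻ p in T, ENNReal.ofReal |(B p).det| * (‖g (e (polarCoord.symm p))‖₊ : ENNReal)
      = ∫⁻ p in T, Φ p := by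
    refine setLIntegral_congr_fun hTmeas (fun p hp => ?_)
    have hp1 : 0 < p.1 := hp.1.1
    have habs1 : ‖e (polarCoord.symm p)‖ = p.1 := by
      rw [habs_e p, abs_of_pos hp1]
    rw [hBdet, hΦ]
    simp only [hg, hh, habs1, abs_of_pos hp1]
  have step5 : ∫⁻ p in T, Φ p ≤ ∫⁻ p in Ioo (0:ℝ) ε ×ˢ Ioo (-π) π, Φ p := by
    refine lintegral_mono_set fun p hp => ?_
    have hp1 : 0 < p.1 := hp.1.1
    have hpball : e (polarCoord.symm p) ∈ Metric.ball (0:ℂ) ε := hp.2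
    rw [mem_ball_zero_iff] at hpball
    have : ‖e (polarCoord.symm p)‖ < ε := hpball
    rw [habs_e p, abs_of_pos hp1] at this
    exact ⟨⟨hp1, this⟩, hp.1.2⟩
  have hψmeas : Measurable fun r : ℝ => ENNReal.ofReal r * (‖h r‖₊ : ENNReal) := by
    have hhm : Measurable h :=
      measurable_const.div
        (((Real.continuous_rpow_const (by linarith : (0:ℝ) ≤ s)).measurable.comp
          measurable_log.abs).mul (measurable_id.pow_const 2))
    exact (measurable_id.ennreal_ofReal).mul hhm.nnnorm.coe_nnreal_ennreal
  have step6 : ∫⁻ p in Ioo (0:ℝ) ε ×ˢ Ioo (-π) π, Φ p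
      = (∫⁻ r in Ioo (0:ℝ) ε, ENNReal.ofReal r * (‖h r‖₊ : ENNReal))
        * volume (Ioo (-π) π) := by
    rw [Measure.volume_eq_prod, ← Measure.prod_restrict]
    have : ∀ p : ℝ × ℝ, Φ p = (fun r => ENNReal.ofReal r * (‖h r‖₊ : ENNReal)) p.1
        * (fun _ : ℝ => (1:ENNReal)) p.2 := by intro p; simp [hΦ]
    simp_rw [this]
    rw [lintegral_prod_mul hψmeas.aemeasurable measurable_const.aemeasurable]
    simp
  have step7 : ∫⁻ r in Ioo (0:ℝ) ε, ENNReal.ofReal r * (‖h r‖₊ : ENNReal)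
      = ∫⁻ r in Ioo (0:ℝ) ε, (‖1 / (r * |Real.log r| ^ s)‖₊ : ENNReal) := by
    refine setLIntegral_congr_fun measurableSet_Ioo (fun r hr => ?_)
    have hr0 : 0 < r := hr.1
    have hlog : Real.log r < 0 := Real.log_neg hr0 (hr.2.trans hε1)
    have hL : (0:ℝ) < |Real.log r| ^ s := Real.rpow_pos_of_pos (abs_pos.mpr hlog.ne) s
    have key : r * h r = 1 / (r * |Real.log r| ^ s) := by
      rw [hh]
      field_simp
    rw [← Real.enorm_eq_ofReal hr0.le, enorm_eq_nnnorm, ← ENNReal.coe_mul, ← nnnorm_mul, key]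
  have hK : (∫⁻ r in Ioo (0:ℝ) ε, (‖1 / (r * |Real.log r| ^ s)‖₊ : ENNReal)) < ⊤ :=
    (aux_real s hs ε hε0 hε1).2
  calc ∫⁻ w in Metric.ball (0:ℂ) ε, (‖g w‖₊ : ENNReal)
      = ∫⁻ p in T, ENNReal.ofReal |(B p).det| * (‖g (e (polarCoord.symm p))‖₊ : ENNReal) := by
        rw [step1, step2, step3]
    _ = ∫⁻ p in T, Φ p := step4
    _ ≤ ∫⁻ p in Ioo (0:ℝ) ε ×ˢ Ioo (-π) π, Φ p := step5
    _ = (∫⁻ r in Ioo (0:ℝ) ε, ENNReal.ofReal r * (‖h r‖₊ : ENNReal)) * volume (Ioo (-π) π) :=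
        step6
    _ < ⊤ := by
        rw [step7]
        exact ENNReal.mul_lt_top hK (measure_Ioo_lt_top)

/-- Lemma 3.1(i), convergence: for `s > 1`, the function
`z ↦ 1 / (|∏ i, ln |z_i||^s · ∏ i, |z_i|²)` is integrable on a small ball in `ℂⁿ`. -/
theorem stmt_0 (n : ℕ) (hn : 1 ≤ n) (s : ℝ) (hs : 1 < s)
    (ε : ℝ) (hε0 : 0 < ε) (hε1 : ε < 1) :
    IntegrableOn
      (fun z : Fin n → ℂ =>
        1 / (|∏ i, Real.log (‖z i‖)| ^ s * ∏ i, ‖z i‖ ^ 2))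
      (Metric.ball 0 ε) := by
  set g : ℂ → ℝ := fun w => 1 / (|Real.log (‖w‖)| ^ s * ‖w‖ ^ 2) with hg
  have hfg : (fun z : Fin n → ℂ =>
      1 / (|∏ i, Real.log (‖z i‖)| ^ s * ∏ i, ‖z i‖ ^ 2))
      = fun z : Fin n → ℂ => ∏ i, g (z i) := by
    funext z
    rw [Finset.abs_prod, ← Real.finset_prod_rpow _ _ (fun i _ => abs_nonneg _) s,
      ← Finset.prod_mul_distrib]
    simp_rw [hg, one_div, ← Finset.prod_inv_distrib]
  rw [hfg]
  have hInt : IntegrableOn g (Metric.ball (0:ℂ) ε) := aux_complex s hs ε hε0 hε1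
  set G : ℂ → ℝ := (Metric.ball (0:ℂ) ε).indicator g with hG
  have hGint : Integrable G := (integrable_indicator_iff measurableSet_ball).mpr hInt
  have hbound : Integrable (fun z : Fin n → ℂ => ∏ i, G (z i)) :=
    Integrable.fintype_prod (fun _ => hGint)
  have hgnn : ∀ w, 0 ≤ g w := by
    intro w
    apply div_nonneg zero_le_one
    exact mul_nonneg (Real.rpow_nonneg (abs_nonneg _) s) (pow_nonneg (norm_nonneg _) 2)
  have habs : Measurable (fun w : ℂ => ‖w‖) := continuous_norm.measurable
  have hgmeas : Measurable g :=
    measurable_const.div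
      (((Real.continuous_rpow_const (by linarith : (0:ℝ) ≤ s)).measurable.comp
        habs.log.abs).mul (habs.pow_const 2))
  refine Integrable.mono' hbound.integrableOn ?_ ?_
  · exact (Finset.measurable_prod Finset.univ
      (fun i _ => hgmeas.comp (measurable_pi_apply i))).aestronglyMeasurable.restrict
  · filter_upwards [ae_restrict_mem measurableSet_ball] with z hz
    rw [Real.norm_eq_abs, abs_of_nonneg (Finset.prod_nonneg fun i _ => hgnn _)]
    refine Finset.prod_le_prod (fun i _ => hgnn _) (fun i _ => ?_)
    have hzi : z i ∈ Metric.ball (0:ℂ) ε := by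
      rw [mem_ball_zero_iff] at hz ⊢
      exact lt_of_le_of_lt (norm_le_pi_norm z i) hz
    rw [hG, Set.indicator_of_mem hzi]
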